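/- Every minimum decomposition tree corresponds to a unique permutation: the map from permutations of {1,...,n} (extended by n+1) to minimum decomposition trees is injective. -/

import Mathlib

/-- A rooted tree with natural-number labels. -/
inductive RTree : Type
  | node : ℕ → List RTree → RTree
deriving Repr

namespace RTree

/-- Number of leaves of a rooted tree (a node with no children is a leaf). -/
def leafCount : RTree → ℕ
  | .node _ cs =>
    if cs.isEmpty then 1 else (cs.attach.map fun c => leafCount c.1).sum
decreasing_by
  have := List.sizeOf_lt_of_mem c.2
  simp only [RTree.node.sizeOf_spec]
  omega

/-- The list of labels of the leaves of a rooted tree. -/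
def leafVals : RTree → List ℕ
  | .node v cs =>
    if cs.isEmpty then [v] else (cs.attach.map fun c => leafVals c.1).flatten
decreasing_by
  have := List.sizeOf_lt_of_mem c.2
  simp only [RTree.node.sizeOf_spec]
  omega

/-- The sum, over all internal (non-leaf) nodes `v`, of the number of leaves in the
subtree of `v`. -/
def incidenceSum : RTree → ℕ
  | .node v cs =>
    if cs.isEmpty then 0
    else leafCount (.node v cs) + (cs.attach.map fun c => incidenceSum c.1).sum
decreasing_by
  have := List.sizeOf_lt_of_mem c.2
  simp only [RTree.node.sizeOf_spec]
  omega

end RTree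

/-- Split a word into blocks by repeatedly cutting just after the (first occurrence of
the) global maximum of the remaining word, as in the maximum-weight tree construction. -/
def maxSplit : ℕ → List ℕ → List (List ℕ)
  | 0, _ => []
  | _, [] => []
  | fuel + 1, l =>
    let i := l.idxOf (l.foldr max 0)
    l.take (i + 1) :: maxSplit fuel (l.drop (i + 1))

/-- Build the minimum decomposition tree of a word: the root is the minimum `m`; the
word splits as `π₁ ⋯ π_L · m · π_R`, where the `πᵢ` are the blocks of the left part
cut at successive global maxima; the children of `m` are the trees of the `πᵢ` and of
`π_R`. -/
def minDecomp : ℕ → List ℕ → RTree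
  | 0, _ => .node 0 []
  | fuel + 1, l =>
    let m := l.foldr min (l.headD 0)
    let i := l.idxOf m
    let left := l.take i
    let right := l.drop (i + 1)
    .node m
      (((maxSplit left.length left).map (minDecomp fuel))
        ++ (if right.isEmpty then [] else [minDecomp fuel right]))

/-- The word of a permutation `σ ∈ Sₙ` (values in `{1,…,n}`) with `n+1` appended. -/
def permWord {n : ℕ} (σ : Equiv.Perm (Fin n)) : List ℕ :=
  (List.ofFn fun i => (σ i : ℕ) + 1) ++ [n + 1]

/-- The minimum decomposition tree of a permutation. -/
def permTree {n : ℕ} (σ : Equiv.Perm (Fin n)) : RTree :=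
  minDecomp (permWord σ).length (permWord σ)

/-- The weight of a permutation `σ ∈ Sₙ` (Corollary 3.3): the sum over the non-descent
nodes of the number of descents (leaves) in their subtree of its maximum-weight maxmin
tree, minus `n`. -/
def permWeight {n : ℕ} (σ : Equiv.Perm (Fin n)) : ℕ :=
  RTree.incidenceSum (permTree σ) - n

/-- The number of descents of a permutation. -/
def numDescents {n : ℕ} (σ : Equiv.Perm (Fin n)) : ℕ :=
  (Finset.univ.filter fun i : Fin n =>
    ∃ h : (i : ℕ) + 1 < n, σ ⟨(i : ℕ) + 1, h⟩ < σ i).card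

/-! ### Auxiliary machinery for the injectivity proof -/

/-- Decode a minimum decomposition tree back into its word. -/
def decode : RTree → List ℕ
  | .node v cs =>
    if cs.isEmpty then [v]
    else ((cs.attach.map fun c => decode c.1).dropLast).flatten
      ++ v :: (cs.attach.map fun c => decode c.1).getLastD []
decreasing_by
  all_goals (have := List.sizeOf_lt_of_mem c.2; simp only [RTree.node.sizeOf_spec]; omega)

theorem decode_node (v : ℕ) (cs : List RTree) :
    decode (.node v cs) = if cs.isEmpty then [v]
      else ((cs.map decode).dropLast).flatten ++ v :: (cs.map decode).getLastD [] := by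
  rw [decode]; simp [List.attach_map_val]

theorem decode_concat (v : ℕ) (as : List RTree) (b : RTree) :
    decode (.node v (as ++ [b])) = (as.map decode).flatten ++ v :: decode b := by
  rw [decode_node]
  simp [List.dropLast_concat, List.getLastD_concat]

theorem foldr_min_helper (l : List ℕ) :
    ∀ a : ℕ, l.foldr min a ∈ a :: l ∧ ∀ x ∈ a :: l, l.foldr min a ≤ x := by
  induction l with
  | nil => intro a; simp
  | cons h t ih =>
    intro a
    obtain ⟨hm, hle⟩ := ih a
    constructor
    · simp only [List.foldr_cons]
      rcases min_choice h (t.foldr min a) with hc | hc <;> rw [hc]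
      · simp
      · simpa [List.mem_cons] using (List.mem_cons.mp hm).imp id Or.inr
    · intro x hx
      simp only [List.foldr_cons]
      rcases List.mem_cons.mp hx with rfl | hx
      · exact le_trans (min_le_right _ _) (hle _ (by simp))
      · rcases List.mem_cons.mp hx with rfl | hx
        · exact min_le_left _ _
        · exact le_trans (min_le_right _ _) (hle _ (by simp [hx]))

theorem foldr_max_helper (l : List ℕ) :
    ∀ a : ℕ, l.foldr max a ∈ a :: l ∧ ∀ x ∈ a :: l, x ≤ l.foldr max a := by
  induction l with
  | nil => intro a; simp
  | cons h t ih =>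
    intro a
    obtain ⟨hm, hle⟩ := ih a
    constructor
    · simp only [List.foldr_cons]
      rcases max_choice h (t.foldr max a) with hc | hc <;> rw [hc]
      · simp
      · simpa [List.mem_cons] using (List.mem_cons.mp hm).imp id Or.inr
    · intro x hx
      simp only [List.foldr_cons]
      rcases List.mem_cons.mp hx with rfl | hx
      · exact le_trans (hle _ (by simp)) (le_max_right _ _)
      · rcases List.mem_cons.mp hx with rfl | hx
        · exact le_max_left _ _
        · exact le_trans (hle _ (by simp [hx])) (le_max_right _ _)

theorem foldr_min_spec (l : List ℕ) (hl : l ≠ []) :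
    l.foldr min (l.headD 0) ∈ l ∧ ∀ x ∈ l, l.foldr min (l.headD 0) ≤ x := by
  obtain ⟨h, t, rfl⟩ := List.exists_cons_of_ne_nil hl
  obtain ⟨hm, hle⟩ := foldr_min_helper t h
  simp only [List.headD_cons, List.foldr_cons]
  have h1 : min h (t.foldr min h) ∈ h :: t := by
    rcases min_choice h (t.foldr min h) with hc | hc <;> rw [hc]
    · simp
    · exact hm
  refine ⟨h1, fun x hx => ?_⟩
  rcases List.mem_cons.mp hx with rfl | hx
  · exact min_le_left _ _
  · exact le_trans (min_le_right _ _) (hle _ (by simp [hx]))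

theorem foldr_max_spec (l : List ℕ) (hl : l ≠ []) :
    l.foldr max 0 ∈ l ∧ ∀ x ∈ l, x ≤ l.foldr max 0 := by
  obtain ⟨hm, hle⟩ := foldr_max_helper l 0
  refine ⟨?_, fun x hx => hle x (by simp [hx])⟩
  rcases List.mem_cons.mp hm with h0 | h
  · obtain ⟨h, t, rfl⟩ := List.exists_cons_of_ne_nil hl
    have : h ≤ 0 := by have := hle h (by simp); omega
    rw [h0]; simp [Nat.le_zero.mp this]
  · exact h

theorem getLastD_eq_getLast (l : List ℕ) (h : l ≠ []) : l.getLastD 0 = l.getLast h := by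
  simp [List.getLastD_eq_getLast?, List.getLast?_eq_getLast h]

theorem getLastD_append' (a b : List ℕ) (hb : b ≠ []) :
    (a ++ b).getLastD 0 = b.getLastD 0 := by
  simp [List.getLastD_eq_getLast?, List.getLast?_append_of_ne_nil _ hb]

theorem maxSplit_spec : ∀ (fuel : ℕ) (l : List ℕ), l.length ≤ fuel →
    (maxSplit fuel l).flatten = l ∧
      ∀ b ∈ maxSplit fuel l, b.Sublist l ∧ b ≠ [] ∧ ∀ x ∈ b, x ≤ b.getLastD 0 := by
  intro fuel
  induction fuel with
  | zero =>
    intro l hl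
    rw [List.length_eq_zero_iff.mp (Nat.le_zero.mp hl)]
    simp [maxSplit]
  | succ fuel ih =>
    intro l hl
    rcases l with _ | ⟨a, t⟩
    · simp [maxSplit]
    set l := a :: t with hldef
    have hlne : l ≠ [] := by simp [hldef]
    obtain ⟨hMmem, hMle⟩ := foldr_max_spec l hlne
    set M := l.foldr max 0 with hM
    set i := l.idxOf M with hi
    have hilt : i < l.length := List.idxOf_lt_length_iff.mpr hMmem
    have hgetM : l[i]'hilt = M := List.getElem_idxOf hilt
    have hms : maxSplit (fuel+1) l = l.take (i+1) :: maxSplit fuel (l.drop (i+1)) := by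
      rw [maxSplit]
      exact fun h => hlne h
    have hdroplen : (l.drop (i+1)).length ≤ fuel := by
      simp only [List.length_drop]
      omega
    obtain ⟨ihflat, ihblocks⟩ := ih _ hdroplen
    have htakene : l.take (i+1) ≠ [] := by
      rw [hldef]; simp
    have htakelen : (l.take (i+1)).length = i + 1 := by
      simp; omega
    have htakelast : (l.take (i+1)).getLastD 0 = M := by
      rw [getLastD_eq_getLast _ htakene, List.getLast_eq_getElem]
      simp only [htakelen, Nat.add_sub_cancel]
      rw [List.getElem_take]
      exact hgetM
    rw [hms]
    constructor
    · simp only [List.flatten_cons, ihflat, List.take_append_drop]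
    · intro b hb
      rcases List.mem_cons.mp hb with rfl | hb
      · exact ⟨List.take_sublist _ _, htakene, fun x hx => by
          rw [htakelast]; exact hMle x (List.mem_of_mem_take hx)⟩
      · obtain ⟨hsub, hne, hlast⟩ := ihblocks b hb
        exact ⟨hsub.trans (List.drop_sublist _ _), hne, hlast⟩

theorem decode_minDecomp : ∀ (fuel : ℕ) (l : List ℕ), l.length ≤ fuel → l ≠ [] →
    l.Nodup → (∀ x ∈ l, x ≤ l.getLastD 0) → decode (minDecomp fuel l) = l := by
  intro fuel
  induction fuel with
  | zero =>
    intro l hl hne _ _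
    exact absurd (List.length_eq_zero_iff.mp (Nat.le_zero.mp hl)) hne
  | succ fuel ih =>
    intro l hl hne hnd hlast
    obtain ⟨hmmem, hmle⟩ := foldr_min_spec l hne
    set m := l.foldr min (l.headD 0) with hm
    set i := l.idxOf m with hi
    have hilt : i < l.length := List.idxOf_lt_length_iff.mpr hmmem
    have hgetm : l[i]'hilt = m := List.getElem_idxOf hilt
    have hsplit : l = l.take i ++ m :: l.drop (i+1) := by
      conv_lhs => rw [← List.take_append_drop i l]
      rw [List.drop_eq_getElem_cons hilt, hgetm]
    have hmd : minDecomp (fuel+1) l = .node m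
        (((maxSplit (l.take i).length (l.take i)).map (minDecomp fuel))
          ++ (if (l.drop (i+1)).isEmpty then [] else [minDecomp fuel (l.drop (i+1))])) := by
      rw [minDecomp]
    by_cases hre : (l.drop (i+1)).isEmpty
    · -- the minimum is the last letter, so the word is a singleton
      have hdnil : l.drop (i+1) = [] := List.isEmpty_iff.mp hre
      have hlen : l.length ≤ i + 1 := by
        have := congrArg List.length hdnil
        simp only [List.length_drop, List.length_nil] at this
        omega
      have hmlastpos : m = l.getLastD 0 := by
        rw [getLastD_eq_getLast _ hne, List.getLast_eq_getElem, ← hgetm]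
        congr 1
        omega
      have hsingle : ∃ a, l = [a] := by
        rcases l with _ | ⟨a, t⟩
        · exact absurd rfl hne
        rcases t with _ | ⟨b, u⟩
        · exact ⟨a, rfl⟩
        · exfalso
          have ha : a = m := le_antisymm
            (hmlastpos ▸ hlast a (by simp)) (hmle a (by simp))
          have hb : b = m := le_antisymm
            (hmlastpos ▸ hlast b (by simp)) (hmle b (by simp))
          have : a ∉ (b :: u) := (List.nodup_cons.mp hnd).1
          exact this (by simp [ha, hb])
      obtain ⟨a, rfl⟩ := hsingle
      have hma : m = a := by simp [hm]
      have hi0 : i = 0 := by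
        have : i < 1 := by simpa using hilt
        omega
      rw [hmd, hre, if_pos rfl, hi0]
      simp only [List.take_zero, List.length_nil]
      rw [show maxSplit 0 [] = [] from rfl]
      simp [decode_node, hma]
    · -- the right part is nonempty
      have hrne : l.drop (i+1) ≠ [] := by
        intro hcon; rw [hcon] at hre; exact hre rfl
      rw [hmd, if_neg hre, decode_concat]
      obtain ⟨hflat, hblocks⟩ := maxSplit_spec (l.take i).length (l.take i) le_rfl
      have htklen : (l.take i).length = i := by simp; omega
      have hdec : ∀ b ∈ maxSplit (l.take i).length (l.take i),
          decode (minDecomp fuel b) = b := by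
        intro b hb
        obtain ⟨hsub, hbne, hblast⟩ := hblocks b hb
        refine ih b ?_ hbne (hnd.sublist (hsub.trans (List.take_sublist _ _))) hblast
        have := hsub.length_le
        omega
      have hmapeq : ((maxSplit (l.take i).length (l.take i)).map (minDecomp fuel)).map decode
          = maxSplit (l.take i).length (l.take i) := by
        rw [List.map_map]
        exact List.map_congr_left hdec |>.trans (List.map_id _)
      have hrdec : decode (minDecomp fuel (l.drop (i+1))) = l.drop (i+1) := by
        refine ih _ ?_ hrne (hnd.sublist (List.drop_sublist _ _)) ?_
        · simp only [List.length_drop]; omega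
        · intro x hx
          have hxl : x ∈ l := (List.drop_sublist _ _).mem hx
          have : l.getLastD 0 = (l.drop (i+1)).getLastD 0 := by
            conv_lhs => rw [← List.take_append_drop (i+1) l]
            exact getLastD_append' _ _ hrne
          rw [← this]
          exact hlast x hxl
      rw [hmapeq, hflat, hrdec]
      exact hsplit.symm

theorem permWord_ne_nil {n : ℕ} (σ : Equiv.Perm (Fin n)) : permWord σ ≠ [] := by
  simp [permWord]

theorem permWord_nodup {n : ℕ} (σ : Equiv.Perm (Fin n)) : (permWord σ).Nodup := by
  rw [permWord]
  refine List.Nodup.append ?_ (List.nodup_singleton _) ?_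
  · rw [List.nodup_ofFn]
    intro a b hab
    have hab' : ((σ a : ℕ)) + 1 = ((σ b : ℕ)) + 1 := hab
    have : σ a = σ b := by
      apply Fin.ext
      omega
    exact σ.injective this
  · intro x hx hy
    simp only [List.mem_ofFn] at hx
    obtain ⟨a, rfl⟩ := hx
    simp only [List.mem_singleton] at hy
    have hval : (σ a : ℕ) + 1 = n + 1 := hy
    have := (σ a).isLt
    omega

theorem permWord_last {n : ℕ} (σ : Equiv.Perm (Fin n)) :
    ∀ x ∈ permWord σ, x ≤ (permWord σ).getLastD 0 := by
  intro x hx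
  have hlast : (permWord σ).getLastD 0 = n + 1 := by
    rw [permWord, getLastD_append' _ _ (by simp)]
    rfl
  rw [hlast]
  rw [permWord] at hx
  rcases List.mem_append.mp hx with hx | hx
  · simp only [List.mem_ofFn] at hx
    obtain ⟨a, rfl⟩ := hx
    show (σ a : ℕ) + 1 ≤ n + 1
    have := (σ a).isLt
    omega
  · simp only [List.mem_singleton] at hx
    omega

theorem permWord_injective (n : ℕ) : Function.Injective (fun σ : Equiv.Perm (Fin n) => permWord σ) := by
  intro σ τ hh
  have h : (List.ofFn fun i => (σ i : ℕ) + 1) = (List.ofFn fun i => (τ i : ℕ) + 1) :=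
    List.append_cancel_right (hh : permWord σ = permWord τ)
  have h' := List.ofFn_injective h
  apply Equiv.ext
  intro a
  have := congrFun h' a
  have hval : (σ a : ℕ) + 1 = (τ a : ℕ) + 1 := this
  exact Fin.ext (by omega)

/-- Every minimum decomposition tree corresponds to a unique permutation (Lemma 3.6):
the map sending a permutation of `{1,…,n}` (extended by `n+1`) to its minimum
decomposition tree is injective. -/
theorem minDecomp_injective (n : ℕ) :
    Function.Injective (fun σ : Equiv.Perm (Fin n) => permTree σ) := by
  intro σ τ h
  apply permWord_injective n
  show permWord σ = permWord τ
  have hσ : decode (permTree σ) = permWord σ :=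
    decode_minDecomp _ _ le_rfl (permWord_ne_nil σ) (permWord_nodup σ) (permWord_last σ)
  have hτ : decode (permTree τ) = permWord τ :=
    decode_minDecomp _ _ le_rfl (permWord_ne_nil τ) (permWord_nodup τ) (permWord_last τ)
  simp only at h
  rw [← hσ, ← hτ, h]
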